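/- Let P be a generic convex polygon with n ≥ 5 vertices, let O_i be the circumcenter of V_{i-1}, V_i, V_{i+1}, and let E(P) be the evolute of P, i.e. the closed polygon with vertex sequence O_1,…,O_n. Let ∠V_i be the left angle of P at V_i and ∠O_i the left angle of E(P) at O_i, each measured with respect to the traversal order. Then: the vertex V_i is locally extremal if and only if ∠V_i − ∠O_i = π or ∠V_i − ∠O_i = −π (i.e. O_i is a cusp of the evolute), and V_i is not locally extremal if and only if ∠V_i − ∠O_i = 0. -/

import Mathlib

open EuclideanGeometry
open scoped Classical

noncomputable section

/-- The Euclidean plane. -/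
abbrev Pt := EuclideanSpace ℝ (Fin 2)

/-- Signed area determinant of the triangle `a b c` (positive iff `a b c` is
counterclockwise, i.e. `c` lies strictly to the left of the directed line `a → b`). -/
def det2 (a b c : Pt) : ℝ :=
  (b 0 - a 0) * (c 1 - a 1) - (b 1 - a 1) * (c 0 - a 0)

/-- The vertices `V 0, V 1, …, V (n-1)` (indices mod `n`) are distinct and in convex
position, listed counterclockwise: every other vertex lies strictly to the left of
each directed edge. -/
def ConvexCCW {n : ℕ} (V : ZMod n → Pt) : Prop :=
  Function.Injective V ∧
    ∀ i j : ZMod n, j ≠ i → j ≠ i + 1 → 0 < det2 (V i) (V (i + 1)) (V j)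

/-- The polygon is generic: no three vertices are collinear and no four vertices lie
on a common circle. -/
def GenericPoly {n : ℕ} (V : ZMod n → Pt) : Prop :=
  (∀ i j k : ZMod n, i ≠ j → j ≠ k → i ≠ k →
      ¬ Collinear ℝ ({V i, V j, V k} : Set Pt)) ∧
  (∀ i j k l : ZMod n, i ≠ j → i ≠ k → i ≠ l → j ≠ k → j ≠ l → k ≠ l →
      ¬ ∃ (O : Pt) (R : ℝ),
        dist (V i) O = R ∧ dist (V j) O = R ∧ dist (V k) O = R ∧ dist (V l) O = R)

/-- `O i` is the center and `R i` the radius of the circle `C i` through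
`V (i-1)`, `V i`, `V (i+1)`. -/
def IsCircumData {n : ℕ} (V O : ZMod n → Pt) (R : ZMod n → ℝ) : Prop :=
  ∀ i : ZMod n,
    dist (V (i - 1)) (O i) = R i ∧ dist (V i) (O i) = R i ∧
      dist (V (i + 1)) (O i) = R i

/-- The polygon is coherent: each circumcenter `O i` lies in the closed infinite cone
with apex `V i` spanned by the rays from `V i` through `V (i-1)` and `V (i+1)`. -/
def Coherent {n : ℕ} (V O : ZMod n → Pt) : Prop :=
  ∀ i : ZMod n, ∃ s t : ℝ, 0 ≤ s ∧ 0 ≤ t ∧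
    O i - V i = s • (V (i - 1) - V i) + t • (V (i + 1) - V i)

/-- `V i` is locally maximal-extremal: `V (i-2)` and `V (i+2)` lie strictly outside `C i`. -/
def LocMax {n : ℕ} (V O : ZMod n → Pt) (R : ZMod n → ℝ) (i : ZMod n) : Prop :=
  R i < dist (V (i - 2)) (O i) ∧ R i < dist (V (i + 2)) (O i)

/-- `V i` is locally minimal-extremal: `V (i-2)` and `V (i+2)` lie strictly inside `C i`. -/
def LocMin {n : ℕ} (V O : ZMod n → Pt) (R : ZMod n → ℝ) (i : ZMod n) : Prop :=
  dist (V (i - 2)) (O i) < R i ∧ dist (V (i + 2)) (O i) < R i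

/-- `V i` is globally maximal-extremal: the open disk bounded by `C i` contains no vertex. -/
def GlobMax {n : ℕ} (V O : ZMod n → Pt) (R : ZMod n → ℝ) (i : ZMod n) : Prop :=
  ∀ j : ZMod n, R i ≤ dist (V j) (O i)

/-- `V i` is globally minimal-extremal: the open disk bounded by `C i` contains every
vertex other than `V (i-1)`, `V i`, `V (i+1)`. -/
def GlobMin {n : ℕ} (V O : ZMod n → Pt) (R : ZMod n → ℝ) (i : ZMod n) : Prop :=
  ∀ j : ZMod n, j ≠ i - 1 → j ≠ i → j ≠ i + 1 → dist (V j) (O i) < R i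

/-- `V i` is radially maximal-extremal: `R (i-1) < R i > R (i+1)`. -/
def RadMax {n : ℕ} (R : ZMod n → ℝ) (i : ZMod n) : Prop :=
  R (i - 1) < R i ∧ R (i + 1) < R i

/-- `V i` is radially minimal-extremal: `R (i-1) > R i < R (i+1)`. -/
def RadMin {n : ℕ} (R : ZMod n → ℝ) (i : ZMod n) : Prop :=
  R i < R (i - 1) ∧ R i < R (i + 1)

end

noncomputable section

/-- The angle of a closed polygon at the middle vertex `b` (coming from `a`, leaving
towards `c`), measured on the left-hand side with respect to the direction of
traversal; it equals the unsigned angle `∠ a b c` when the traversal turns left at `b`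
and `2π - ∠ a b c` when it turns right. -/
def leftAngle (a b c : Pt) : ℝ :=
  if 0 < det2 a b c then EuclideanGeometry.angle a b c
  else 2 * Real.pi - EuclideanGeometry.angle a b c

/-- The discrete winding number of the closed polygon with vertex sequence `W`:
`wind(W) = (1/2π) ∑ᵢ (π - ∠Wᵢ)`. -/
def wind {n : ℕ} [NeZero n] (W : ZMod n → Pt) : ℝ :=
  (1 / (2 * Real.pi)) *
    ∑ i : ZMod n, (Real.pi - leftAngle (W (i - 1)) (W i) (W (i + 1)))

end


lemma evo_zmod_const_ne_zero (n : ℕ) [NeZero n] (hn : 5 ≤ n) (k : ℕ) (h0 : 0 < k) (hk : k < 5) :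
    ((k : ℕ) : ZMod n) ≠ 0 := by
  rw [Ne, ZMod.natCast_eq_zero_iff]
  intro h
  have := Nat.le_of_dvd h0 h
  omega

noncomputable section

lemma evo_norm_coords (x : Pt) : ‖x‖ = Real.sqrt (x 0^2 + x 1^2) := by
  rw [EuclideanSpace.norm_eq]
  simp [Fin.sum_univ_two, Real.norm_eq_abs, sq_abs]

lemma evo_inner_coords (x y : Pt) : (inner ℝ x y : ℝ) = x 0 * y 0 + x 1 * y 1 := by
  simp [PiLp.inner_apply, RCLike.inner_apply, Fin.sum_univ_two, mul_comm]

lemma evo_angle_coords (x y : Pt) : InnerProductGeometry.angle x y =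
    Real.arccos ((x 0 * y 0 + x 1 * y 1) /
      (Real.sqrt (x 0^2 + x 1^2) * Real.sqrt (y 0^2 + y 1^2))) := by
  rw [InnerProductGeometry.angle, evo_inner_coords, evo_norm_coords, evo_norm_coords]

lemma evo_dist_sq (a b : Pt) : dist a b ^ 2 = (a 0 - b 0)^2 + (a 1 - b 1)^2 := by
  rw [EuclideanSpace.dist_eq, Real.sq_sqrt (by positivity)]
  simp [Fin.sum_univ_two, Real.dist_eq, sq_abs]

lemma eevo_angle_coords (a b c : Pt) : EuclideanGeometry.angle a b c =
    Real.arccos (((a 0 - b 0) * (c 0 - b 0) + (a 1 - b 1) * (c 1 - b 1)) /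
      (Real.sqrt ((a 0 - b 0)^2 + (a 1 - b 1)^2) *
        Real.sqrt ((c 0 - b 0)^2 + (c 1 - b 1)^2))) := by
  rw [EuclideanGeometry.angle, vsub_eq_sub, vsub_eq_sub, evo_angle_coords]
  simp

lemma evo_sq_lt_sq (a b : ℝ) (ha : 0 ≤ a) (hb : 0 ≤ b) : a < b ↔ a^2 < b^2 := by
  constructor <;> intro h <;> nlinarith

lemma evo_sign_iff_pos (d r e m : ℝ) (hr : 0 ≤ r) (hd : 0 ≤ d) (hm : 0 < m)
    (hS : d^2 - r^2 = 2 * e * m) : (r < d ↔ 0 < e) ∧ (d < r ↔ e < 0) := by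
  constructor <;> constructor <;> intro h <;> nlinarith

lemma evo_sumsq_pos (a b : ℝ) (h : ¬ (a = 0 ∧ b = 0)) : 0 < a^2 + b^2 := by
  rcases (by positivity : (0:ℝ) ≤ a^2 + b^2).lt_or_eq with h1 | h1
  · exact h1
  · exfalso
    exact h ⟨by nlinarith [sq_nonneg a, sq_nonneg b], by nlinarith [sq_nonneg a, sq_nonneg b]⟩

set_option maxHeartbeats 1600000 in
lemma evo_key_lemma (Vm2 Vm1 V0 Vp1 Vp2 Om1 O0 Op1 : Pt) (Rm R0 Rp : ℝ)
    (hm1 : dist Vm2 Om1 = Rm) (hm2 : dist Vm1 Om1 = Rm) (hm3 : dist V0 Om1 = Rm)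
    (h01 : dist Vm1 O0 = R0) (h02 : dist V0 O0 = R0) (h03 : dist Vp1 O0 = R0)
    (hp1 : dist V0 Op1 = Rp) (hp2 : dist Vp1 Op1 = Rp) (hp3 : dist Vp2 Op1 = Rp)
    (hc1 : 0 < det2 Vm1 V0 Vp1) (hc2 : 0 < det2 V0 Vp1 Vp2) (hc3 : 0 < det2 Vm1 V0 Vm2)
    (hne1 : Om1 ≠ O0) (hne2 : O0 ≠ Op1) :
    (((R0 < dist Vm2 O0 ∧ R0 < dist Vp2 O0) ∨
        (dist Vm2 O0 < R0 ∧ dist Vp2 O0 < R0)) ↔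
      (leftAngle Vm1 V0 Vp1 - leftAngle Om1 O0 Op1 = Real.pi ∨
       leftAngle Vm1 V0 Vp1 - leftAngle Om1 O0 Op1 = -Real.pi)) ∧
    (¬ ((R0 < dist Vm2 O0 ∧ R0 < dist Vp2 O0) ∨
        (dist Vm2 O0 < R0 ∧ dist Vp2 O0 < R0)) ↔
      leftAngle Vm1 V0 Vp1 - leftAngle Om1 O0 Op1 = 0) := by
  -- squared distance hypotheses
  have Hm1 : (Vm2 0 - Om1 0)^2 + (Vm2 1 - Om1 1)^2 = Rm^2 := by rw [← hm1, evo_dist_sq]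
  have Hm2 : (Vm1 0 - Om1 0)^2 + (Vm1 1 - Om1 1)^2 = Rm^2 := by rw [← hm2, evo_dist_sq]
  have Hm3 : (V0 0 - Om1 0)^2 + (V0 1 - Om1 1)^2 = Rm^2 := by rw [← hm3, evo_dist_sq]
  have H01 : (Vm1 0 - O0 0)^2 + (Vm1 1 - O0 1)^2 = R0^2 := by rw [← h01, evo_dist_sq]
  have H02 : (V0 0 - O0 0)^2 + (V0 1 - O0 1)^2 = R0^2 := by rw [← h02, evo_dist_sq]
  have H03 : (Vp1 0 - O0 0)^2 + (Vp1 1 - O0 1)^2 = R0^2 := by rw [← h03, evo_dist_sq]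
  have Hp1 : (V0 0 - Op1 0)^2 + (V0 1 - Op1 1)^2 = Rp^2 := by rw [← hp1, evo_dist_sq]
  have Hp2 : (Vp1 0 - Op1 0)^2 + (Vp1 1 - Op1 1)^2 = Rp^2 := by rw [← hp2, evo_dist_sq]
  have Hp3 : (Vp2 0 - Op1 0)^2 + (Vp2 1 - Op1 1)^2 = Rp^2 := by rw [← hp3, evo_dist_sq]
  have hR00 : 0 ≤ R0 := h01 ▸ dist_nonneg
  -- coordinate convexity
  have hc1' : 0 < (V0 0 - Vm1 0) * (Vp1 1 - Vm1 1) - (V0 1 - Vm1 1) * (Vp1 0 - Vm1 0) := hc1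
  have hc2' : 0 < (Vp1 0 - V0 0) * (Vp2 1 - V0 1) - (Vp1 1 - V0 1) * (Vp2 0 - V0 0) := hc2
  have hc3' : 0 < (V0 0 - Vm1 0) * (Vm2 1 - Vm1 1) - (V0 1 - Vm1 1) * (Vm2 0 - Vm1 0) := hc3
  -- orthogonality
  have horthA : (V0 0 - Vm1 0) * (O0 0 - Om1 0) + (V0 1 - Vm1 1) * (O0 1 - Om1 1) = 0 := by
    linear_combination (Hm3 - Hm2 - H02 + H01)/2
  have horthB : (Vp1 0 - V0 0) * (Op1 0 - O0 0) + (Vp1 1 - V0 1) * (Op1 1 - O0 1) = 0 := by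
    linear_combination (H03 - H02 - Hp2 + Hp1)/2
  -- edge-length squares positive
  have hs' : 0 < (V0 0 - Vm1 0)^2 + (V0 1 - Vm1 1)^2 := by
    apply evo_sumsq_pos
    rintro ⟨e0, e1⟩
    rw [e0, e1] at hc1'
    simp at hc1'
  have hs : 0 < (Vp1 0 - V0 0)^2 + (Vp1 1 - V0 1)^2 := by
    apply evo_sumsq_pos
    rintro ⟨e0, e1⟩
    rw [e0, e1] at hc2'
    simp at hc2'
  set s' : ℝ := (V0 0 - Vm1 0)^2 + (V0 1 - Vm1 1)^2 with hs'def
  set s : ℝ := (Vp1 0 - V0 0)^2 + (Vp1 1 - V0 1)^2 with hsdef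
  -- the lambdas
  set lA : ℝ := ((V0 0 - Vm1 0) * (O0 1 - Om1 1) - (V0 1 - Vm1 1) * (O0 0 - Om1 0)) / s' with hlAdef
  set lB : ℝ := ((Vp1 0 - V0 0) * (Op1 1 - O0 1) - (Vp1 1 - V0 1) * (Op1 0 - O0 0)) / s with hlBdef
  have hlAs : lA * s' = (V0 0 - Vm1 0) * (O0 1 - Om1 1) - (V0 1 - Vm1 1) * (O0 0 - Om1 0) :=
    div_mul_cancel₀ _ hs'.ne'
  have hlBs : lB * s = (Vp1 0 - V0 0) * (Op1 1 - O0 1) - (Vp1 1 - V0 1) * (Op1 0 - O0 0) :=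
    div_mul_cancel₀ _ hs.ne'
  -- components of the evolute edges
  have hA0 : O0 0 - Om1 0 = -(lA * (V0 1 - Vm1 1)) := by
    have h := mul_left_cancel₀ hs'.ne' (a := s') (b := O0 0 - Om1 0)
      (c := -(lA * (V0 1 - Vm1 1)))
    apply h
    linear_combination (V0 0 - Vm1 0) * horthA + (V0 1 - Vm1 1) * hlAs
  have hA1 : O0 1 - Om1 1 = lA * (V0 0 - Vm1 0) := by
    apply mul_left_cancel₀ hs'.ne' (a := s')
    linear_combination (V0 1 - Vm1 1) * horthA - (V0 0 - Vm1 0) * hlAs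
  have hB0 : Op1 0 - O0 0 = -(lB * (Vp1 1 - V0 1)) := by
    apply mul_left_cancel₀ hs.ne' (a := s)
    linear_combination (Vp1 0 - V0 0) * horthB + (Vp1 1 - V0 1) * hlBs
  have hB1 : Op1 1 - O0 1 = lB * (Vp1 0 - V0 0) := by
    apply mul_left_cancel₀ hs.ne' (a := s)
    linear_combination (Vp1 1 - V0 1) * horthB - (Vp1 0 - V0 0) * hlBs
  -- lambdas nonzero
  have hlA0 : lA ≠ 0 := by
    intro h
    apply hne1
    have hA0' : O0 0 - Om1 0 = 0 := by rw [h] at hA0; linarith [hA0]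
    have hA1' : O0 1 - Om1 1 = 0 := by rw [h] at hA1; linarith [hA1]
    have d0 : dist Om1 O0 ^ 2 = 0 := by
      rw [evo_dist_sq]
      linear_combination (O0 0 - Om1 0) * hA0' + (O0 1 - Om1 1) * hA1'
    have := pow_eq_zero_iff (n := 2) (by norm_num) |>.mp d0
    exact dist_eq_zero.mp this
  have hlB0 : lB ≠ 0 := by
    intro h
    apply hne2
    have hB0' : Op1 0 - O0 0 = 0 := by rw [h] at hB0; linarith [hB0]
    have hB1' : Op1 1 - O0 1 = 0 := by rw [h] at hB1; linarith [hB1]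
    have d0 : dist O0 Op1 ^ 2 = 0 := by
      rw [evo_dist_sq]
      linear_combination (Op1 0 - O0 0) * hB0' + (Op1 1 - O0 1) * hB1'
    have := pow_eq_zero_iff (n := 2) (by norm_num) |>.mp d0
    exact dist_eq_zero.mp this
  -- quadrance identities
  have S2 : dist Vm2 O0 ^ 2 - R0 ^ 2 =
      -(2 * lA * ((V0 0 - Vm1 0) * (Vm2 1 - Vm1 1) - (V0 1 - Vm1 1) * (Vm2 0 - Vm1 0))) := by
    rw [evo_dist_sq]
    linear_combination Hm1 - Hm2 + H01 - 2*(Vm2 0 - Vm1 0)*hA0 - 2*(Vm2 1 - Vm1 1)*hA1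
  have S1 : dist Vp2 O0 ^ 2 - R0 ^ 2 =
      2 * lB * ((Vp1 0 - V0 0) * (Vp2 1 - V0 1) - (Vp1 1 - V0 1) * (Vp2 0 - V0 0)) := by
    rw [evo_dist_sq]
    linear_combination Hp3 - Hp2 + H03 + 2*(Vp2 0 - Vp1 0)*hB0 + 2*(Vp2 1 - Vp1 1)*hB1
  -- sign characterizations
  have S2' : dist Vm2 O0 ^ 2 - R0 ^ 2 =
      2 * (-lA) * ((V0 0 - Vm1 0) * (Vm2 1 - Vm1 1) - (V0 1 - Vm1 1) * (Vm2 0 - Vm1 0)) := by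
    linear_combination S2
  obtain ⟨sgnM0, sgnM0'⟩ := evo_sign_iff_pos (dist Vm2 O0) R0 (-lA) _ hR00 dist_nonneg hc3' S2'
  have sgnM : R0 < dist Vm2 O0 ↔ lA < 0 := by rw [sgnM0, neg_pos]
  have sgnM' : dist Vm2 O0 < R0 ↔ 0 < lA := by rw [sgnM0', neg_lt_zero]
  obtain ⟨sgnP, sgnP'⟩ := evo_sign_iff_pos (dist Vp2 O0) R0 lB _ hR00 dist_nonneg hc2' S1
  -- determinant of the evolute triple
  have hdetO : det2 Om1 O0 Op1 =
      lA * lB * ((V0 0 - Vm1 0) * (Vp1 1 - Vm1 1) - (V0 1 - Vm1 1) * (Vp1 0 - Vm1 0)) := by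
    show (O0 0 - Om1 0) * (Op1 1 - Om1 1) - (O0 1 - Om1 1) * (Op1 0 - Om1 0) = _
    linear_combination (Op1 1 - O0 1) * hA0 - (Op1 0 - O0 0) * hA1
      - lA * (V0 1 - Vm1 1) * hB1 - lA * (V0 0 - Vm1 0) * hB0
  -- the polygon angle
  have hLV : leftAngle Vm1 V0 Vp1 = Real.arccos
      (((Vm1 0 - V0 0) * (Vp1 0 - V0 0) + (Vm1 1 - V0 1) * (Vp1 1 - V0 1)) /
        (Real.sqrt ((Vm1 0 - V0 0)^2 + (Vm1 1 - V0 1)^2) *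
          Real.sqrt ((Vp1 0 - V0 0)^2 + (Vp1 1 - V0 1)^2))) := by
    rw [leftAngle, if_pos hc1, eevo_angle_coords]
  set qV : ℝ := ((Vm1 0 - V0 0) * (Vp1 0 - V0 0) + (Vm1 1 - V0 1) * (Vp1 1 - V0 1)) /
        (Real.sqrt ((Vm1 0 - V0 0)^2 + (Vm1 1 - V0 1)^2) *
          Real.sqrt ((Vp1 0 - V0 0)^2 + (Vp1 1 - V0 1)^2)) with hqVdef
  -- norms of the evolute edges
  have hsq' : Real.sqrt ((Om1 0 - O0 0)^2 + (Om1 1 - O0 1)^2) = |lA| * Real.sqrt s' := by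
    rw [show (Om1 0 - O0 0)^2 + (Om1 1 - O0 1)^2 = lA^2 * s' by
      rw [hs'def]; linear_combination (O0 0 - Om1 0 - lA*(V0 1 - Vm1 1)) * hA0
        + (O0 1 - Om1 1 + lA*(V0 0 - Vm1 0)) * hA1]
    rw [Real.sqrt_mul (sq_nonneg _), Real.sqrt_sq_eq_abs]
  have hsq : Real.sqrt ((Op1 0 - O0 0)^2 + (Op1 1 - O0 1)^2) = |lB| * Real.sqrt s := by
    rw [show (Op1 0 - O0 0)^2 + (Op1 1 - O0 1)^2 = lB^2 * s by
      rw [hsdef]; linear_combination (Op1 0 - O0 0 - lB*(Vp1 1 - V0 1)) * hB0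
        + (Op1 1 - O0 1 + lB*(Vp1 0 - V0 0)) * hB1]
    rw [Real.sqrt_mul (sq_nonneg _), Real.sqrt_sq_eq_abs]
  have hnum : (Om1 0 - O0 0) * (Op1 0 - O0 0) + (Om1 1 - O0 1) * (Op1 1 - O0 1) =
      lA * lB * (((Vm1 0 - V0 0) * (Vp1 0 - V0 0) + (Vm1 1 - V0 1) * (Vp1 1 - V0 1))) := by
    linear_combination (-(Op1 0 - O0 0)) * hA0 - (Op1 1 - O0 1) * hA1
      + lA * (V0 1 - Vm1 1) * hB0 - lA * (V0 0 - Vm1 0) * hB1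
  have h1 : Real.sqrt ((Vm1 0 - V0 0)^2 + (Vm1 1 - V0 1)^2) = Real.sqrt s' := by
    rw [hs'def]; congr 1; ring
  have h2 : Real.sqrt ((Vp1 0 - V0 0)^2 + (Vp1 1 - V0 1)^2) = Real.sqrt s := by rw [hsdef]
  have hA' : |lA| ≠ 0 := abs_ne_zero.mpr hlA0
  have hB' : |lB| ≠ 0 := abs_ne_zero.mpr hlB0
  have hss' : Real.sqrt s' ≠ 0 := (Real.sqrt_pos.mpr hs').ne'
  have hss : Real.sqrt s ≠ 0 := (Real.sqrt_pos.mpr hs).ne'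
  clear hm1 hm2 hm3 h01 h02 h03 hp1 hp2 hp3 Hm1 Hm2 Hm3 H01 H02 H03 Hp1 Hp2 Hp3
  clear horthA horthB hlAs hlBs hA0 hA1 hB0 hB1 S1 S2 S2' sgnM0 sgnM0'
  clear hlAdef hlBdef hs'def hsdef
  clear_value lA lB s' s qV
  have hEA : EuclideanGeometry.angle Om1 O0 Op1 = Real.arccos
      ((lA * lB / |lA * lB|) * qV) := by
    rw [eevo_angle_coords, hsq', hsq, hnum, hqVdef, h1, h2, abs_mul]
    congr 1
    ring
  -- main case analysis
  rcases hlA0.lt_or_gt with hA | hA <;> rcases hlB0.lt_or_gt with hB | hB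
  · -- lA < 0, lB < 0 : not extremal
    have hAB : 0 < lA * lB := mul_pos_of_neg_of_neg hA hB
    have hdet : 0 < det2 Om1 O0 Op1 := by rw [hdetO]; exact mul_pos hAB hc1'
    have hLO : leftAngle Om1 O0 Op1 = Real.arccos qV := by
      rw [leftAngle, if_pos hdet, hEA, abs_of_pos hAB, div_self hAB.ne', one_mul]
    have hdiff : leftAngle Vm1 V0 Vp1 - leftAngle Om1 O0 Op1 = 0 := by
      rw [hLV, hLO]; ring
    have hnotext : ¬ ((R0 < dist Vm2 O0 ∧ R0 < dist Vp2 O0) ∨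
        (dist Vm2 O0 < R0 ∧ dist Vp2 O0 < R0)) := by
      rintro (⟨h1, h2⟩ | ⟨h1, h2⟩)
      · exact absurd (sgnP.mp h2) (asymm hB)
      · exact absurd (sgnM'.mp h1) (asymm hA)
    refine ⟨⟨fun h => absurd h hnotext, fun h => ?_⟩, ⟨fun _ => hdiff, fun _ => hnotext⟩⟩
    · exfalso; rcases h with h | h <;> rw [hdiff] at h <;>
        [exact Real.pi_ne_zero h.symm; linarith [Real.pi_pos]]
  · -- lA < 0, 0 < lB : extremal (LocMax)
    have hAB : lA * lB < 0 := mul_neg_of_neg_of_pos hA hB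
    have hdet : det2 Om1 O0 Op1 < 0 := by rw [hdetO]; exact mul_neg_of_neg_of_pos hAB hc1'
    have hLO : leftAngle Om1 O0 Op1 = Real.pi + Real.arccos qV := by
      rw [leftAngle, if_neg (not_lt.mpr hdet.le), hEA, abs_of_neg hAB]
      rw [show lA * lB / -(lA * lB) * qV = -qV by field_simp]
      rw [Real.arccos_neg]; ring
    have hdiff : leftAngle Vm1 V0 Vp1 - leftAngle Om1 O0 Op1 = -Real.pi := by
      rw [hLV, hLO]; ring
    have hext : (R0 < dist Vm2 O0 ∧ R0 < dist Vp2 O0) ∨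
        (dist Vm2 O0 < R0 ∧ dist Vp2 O0 < R0) :=
      Or.inl ⟨sgnM.mpr hA, sgnP.mpr hB⟩
    refine ⟨⟨fun _ => Or.inr hdiff, fun _ => hext⟩,
      ⟨fun h => absurd hext h, fun h => ?_⟩⟩
    · exfalso; rw [hdiff] at h; linarith [Real.pi_pos]
  · -- 0 < lA, lB < 0 : extremal (LocMin)
    have hAB : lA * lB < 0 := mul_neg_of_pos_of_neg hA hB
    have hdet : det2 Om1 O0 Op1 < 0 := by rw [hdetO]; exact mul_neg_of_neg_of_pos hAB hc1'
    have hLO : leftAngle Om1 O0 Op1 = Real.pi + Real.arccos qV := by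
      rw [leftAngle, if_neg (not_lt.mpr hdet.le), hEA, abs_of_neg hAB]
      rw [show lA * lB / -(lA * lB) * qV = -qV by field_simp]
      rw [Real.arccos_neg]; ring
    have hdiff : leftAngle Vm1 V0 Vp1 - leftAngle Om1 O0 Op1 = -Real.pi := by
      rw [hLV, hLO]; ring
    have hext : (R0 < dist Vm2 O0 ∧ R0 < dist Vp2 O0) ∨
        (dist Vm2 O0 < R0 ∧ dist Vp2 O0 < R0) :=
      Or.inr ⟨sgnM'.mpr hA, sgnP'.mpr hB⟩
    refine ⟨⟨fun _ => Or.inr hdiff, fun _ => hext⟩,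
      ⟨fun h => absurd hext h, fun h => ?_⟩⟩
    · exfalso; rw [hdiff] at h; linarith [Real.pi_pos]
  · -- 0 < lA, 0 < lB : not extremal
    have hAB : 0 < lA * lB := mul_pos hA hB
    have hdet : 0 < det2 Om1 O0 Op1 := by rw [hdetO]; exact mul_pos hAB hc1'
    have hLO : leftAngle Om1 O0 Op1 = Real.arccos qV := by
      rw [leftAngle, if_pos hdet, hEA, abs_of_pos hAB, div_self hAB.ne', one_mul]
    have hdiff : leftAngle Vm1 V0 Vp1 - leftAngle Om1 O0 Op1 = 0 := by
      rw [hLV, hLO]; ring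
    have hnotext : ¬ ((R0 < dist Vm2 O0 ∧ R0 < dist Vp2 O0) ∨
        (dist Vm2 O0 < R0 ∧ dist Vp2 O0 < R0)) := by
      rintro (⟨h1, h2⟩ | ⟨h1, h2⟩)
      · exact absurd (sgnM.mp h1) (asymm hA)
      · exact absurd (sgnP'.mp h2) (asymm hB)
    refine ⟨⟨fun h => absurd h hnotext, fun h => ?_⟩, ⟨fun _ => hdiff, fun _ => hnotext⟩⟩
    · exfalso; rcases h with h | h <;> rw [hdiff] at h <;>
        [exact Real.pi_ne_zero h.symm; linarith [Real.pi_pos]]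

end

/-- For a generic convex polygon `P` with `n ≥ 5` vertices and its evolute `E(P)`
(the closed polygon of circumcenters `O`): a vertex `V i` is locally extremal iff
`∠Vᵢ - ∠Oᵢ = ±π` (i.e. `O i` is a cusp of the evolute), and `V i` is not locally
extremal iff `∠Vᵢ - ∠Oᵢ = 0`. -/
theorem locally_extremal_iff_evolute_cusp
    (n : ℕ) [NeZero n] (hn : 5 ≤ n)
    (V O : ZMod n → Pt) (R : ZMod n → ℝ)
    (hconv : ConvexCCW V) (hgen : GenericPoly V) (hcirc : IsCircumData V O R)
    (i : ZMod n) :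
    ((LocMax V O R i ∨ LocMin V O R i) ↔
      (leftAngle (V (i - 1)) (V i) (V (i + 1)) -
          leftAngle (O (i - 1)) (O i) (O (i + 1)) = Real.pi ∨
       leftAngle (V (i - 1)) (V i) (V (i + 1)) -
          leftAngle (O (i - 1)) (O i) (O (i + 1)) = -Real.pi)) ∧
    (¬ (LocMax V O R i ∨ LocMin V O R i) ↔
      leftAngle (V (i - 1)) (V i) (V (i + 1)) -
          leftAngle (O (i - 1)) (O i) (O (i + 1)) = 0) := by
  have hz1 : (1 : ZMod n) ≠ 0 := by
    have := evo_zmod_const_ne_zero n hn 1 (by norm_num) (by norm_num); simpa using this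
  have hz2 : (2 : ZMod n) ≠ 0 := by
    have := evo_zmod_const_ne_zero n hn 2 (by norm_num) (by norm_num); simpa using this
  have hz3 : (3 : ZMod n) ≠ 0 := by
    have := evo_zmod_const_ne_zero n hn 3 (by norm_num) (by norm_num); simpa using this
  obtain ⟨c1, c2, c3⟩ := hcirc (i-1)
  rw [show i-1-1 = i-2 from by ring] at c1
  rw [show i-1+1 = i from by ring] at c3
  obtain ⟨d1, d2, d3⟩ := hcirc i
  obtain ⟨e1, e2, e3⟩ := hcirc (i+1)
  rw [show i+1-1 = i from by ring] at e1
  rw [show i+1+1 = i+2 from by ring] at e3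
  have hcv1 : 0 < det2 (V (i-1)) (V i) (V (i+1)) := by
    have h := hconv.2 (i-1) (i+1) (fun h => hz2 (by linear_combination h))
      (fun h => hz1 (by linear_combination h))
    rwa [show i-1+1 = i from by ring] at h
  have hcv2 : 0 < det2 (V i) (V (i+1)) (V (i+2)) :=
    hconv.2 i (i+2) (fun h => hz2 (by linear_combination h))
      (fun h => hz1 (by linear_combination h))
  have hcv3 : 0 < det2 (V (i-1)) (V i) (V (i-2)) := by
    have h := hconv.2 (i-1) (i-2) (fun h => hz1 (by linear_combination -h))
      (fun h => hz2 (by linear_combination -h))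
    rwa [show i-1+1 = i from by ring] at h
  have hne1 : O (i-1) ≠ O i := by
    intro h
    have hRR : R (i-1) = R i := by rw [← c2, h, d1]
    exact hgen.2 (i-2) (i-1) i (i+1)
      (fun h' => hz1 (by linear_combination -h'))
      (fun h' => hz2 (by linear_combination -h'))
      (fun h' => hz3 (by linear_combination -h'))
      (fun h' => hz1 (by linear_combination -h'))
      (fun h' => hz2 (by linear_combination -h'))
      (fun h' => hz1 (by linear_combination -h'))
      ⟨O i, R i, by rw [← h, c1, hRR], d1, d2, d3⟩
  have hne2 : O i ≠ O (i+1) := by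
    intro h
    have hRR : R (i+1) = R i := by rw [← e2, ← h, d3]
    exact hgen.2 (i-1) i (i+1) (i+2)
      (fun h' => hz1 (by linear_combination -h'))
      (fun h' => hz2 (by linear_combination -h'))
      (fun h' => hz3 (by linear_combination -h'))
      (fun h' => hz1 (by linear_combination -h'))
      (fun h' => hz2 (by linear_combination -h'))
      (fun h' => hz1 (by linear_combination -h'))
      ⟨O i, R i, d1, d2, d3, by rw [h, e3, hRR]⟩
  simp only [LocMax, LocMin]
  exact evo_key_lemma (V (i-2)) (V (i-1)) (V i) (V (i+1)) (V (i+2)) (O (i-1)) (O i) (O (i+1))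
    (R (i-1)) (R i) (R (i+1)) c1 c2 c3 d1 d2 d3 e1 e2 e3 hcv1 hcv2 hcv3 hne1 hne2
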